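/- For every n ≥ 3, writing g(m) for the number of permutations π ∈ S_m such that π avoids both 213 and 312 and π² avoids the consecutive pattern 213, one has g(n) = g(n−1) + 2^{n−3} + 1. -/

import Mathlib

/-- `π` contains the (classical) pattern `σ`: there is a strictly increasing
sequence of positions on which `π` is order isomorphic to `σ`. -/
def ContainsPat {n k : ℕ} (π : Equiv.Perm (Fin n)) (σ : Equiv.Perm (Fin k)) : Prop :=
  ∃ f : Fin k → Fin n, StrictMono f ∧ ∀ a b : Fin k, σ a < σ b ↔ π (f a) < π (f b)

/-- `π` avoids the pattern `σ`. -/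
def AvoidsPat {n k : ℕ} (π : Equiv.Perm (Fin n)) (σ : Equiv.Perm (Fin k)) : Prop :=
  ¬ ContainsPat π σ

/-- `π` contains the consecutive pattern `σ`: some `k` consecutive positions of `π`
carry values order isomorphic to `σ`. -/
def ContainsConsecPat {n k : ℕ} (π : Equiv.Perm (Fin n)) (σ : Equiv.Perm (Fin k)) : Prop :=
  ∃ (i : ℕ) (h : i + k ≤ n), ∀ a b : Fin k,
    σ a < σ b ↔ π ⟨i + a.val, by have := a.isLt; omega⟩ < π ⟨i + b.val, by have := b.isLt; omega⟩

/-- `π` avoids the consecutive pattern `σ`. -/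
def AvoidsConsecPat {n k : ℕ} (π : Equiv.Perm (Fin n)) (σ : Equiv.Perm (Fin k)) : Prop :=
  ¬ ContainsConsecPat π σ

/-- the pattern 231 (0-indexed: 0 ↦ 1, 1 ↦ 2, 2 ↦ 0) -/
def p231 : Equiv.Perm (Fin 3) := c[0, 1, 2]

/-- the pattern 312 (0-indexed: 0 ↦ 2, 1 ↦ 0, 2 ↦ 1) -/
def p312 : Equiv.Perm (Fin 3) := c[0, 2, 1]

/-- the pattern 213 (0-indexed: 0 ↦ 1, 1 ↦ 0, 2 ↦ 2) -/
def p213 : Equiv.Perm (Fin 3) := c[0, 1]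

/-- the pattern 1432 (0-indexed: 0 ↦ 0, 1 ↦ 3, 2 ↦ 2, 3 ↦ 1) -/
def p1432 : Equiv.Perm (Fin 4) := c[1, 3]

/-- direct sum of two permutations -/
def dsum {k m : ℕ} (σ : Equiv.Perm (Fin k)) (τ : Equiv.Perm (Fin m)) :
    Equiv.Perm (Fin (k + m)) :=
  finSumFinEquiv.symm.trans ((Equiv.sumCongr σ τ).trans finSumFinEquiv)

/-- the Lucas numbers: L₁ = 1, L₂ = 3, L_m = L_{m-1} + L_{m-2} -/
def lucas : ℕ → ℕ
  | 0 => 2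
  | 1 => 1
  | n + 2 => lucas (n + 1) + lucas n

namespace S13

def pf {m : ℕ} (π : Equiv.Perm (Fin m)) (i : ℕ) : ℕ :=
  if h : i < m then (π ⟨i, h⟩).val else i

lemma pf_of_lt {m : ℕ} (π : Equiv.Perm (Fin m)) {i : ℕ} (h : i < m) :
    pf π i = (π ⟨i, h⟩).val := dif_pos h

lemma val_eq_pf {m : ℕ} (π : Equiv.Perm (Fin m)) (j : ℕ) (h : j < m) :
    (π ⟨j, h⟩).val = pf π j := (pf_of_lt π h).symm

lemma apply_eq_pf {m : ℕ} (π : Equiv.Perm (Fin m)) (x : Fin m) :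
    (π x).val = pf π x.val := by
  rw [← val_eq_pf π x.val x.isLt]

lemma pf_of_ge {m : ℕ} (π : Equiv.Perm (Fin m)) {i : ℕ} (h : ¬ i < m) :
    pf π i = i := dif_neg h

lemma pf_lt {m : ℕ} (π : Equiv.Perm (Fin m)) {i : ℕ} (h : i < m) : pf π i < m := by
  rw [pf_of_lt π h]; exact (π ⟨i, h⟩).isLt

lemma pf_inj {m : ℕ} (π : Equiv.Perm (Fin m)) {i j : ℕ} (h : pf π i = pf π j) : i = j := by
  by_cases hi : i < m <;> by_cases hj : j < m
  · rw [pf_of_lt π hi, pf_of_lt π hj] at h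
    have : π ⟨i, hi⟩ = π ⟨j, hj⟩ := Fin.ext h
    simpa [Fin.ext_iff] using π.injective this
  · have h1 := pf_lt π hi
    have h2 := pf_of_ge π hj
    omega
  · have h1 := pf_lt π hj
    have h2 := pf_of_ge π hi
    omega
  · rwa [pf_of_ge π hi, pf_of_ge π hj] at h

lemma pf_symm_pf {m : ℕ} (π : Equiv.Perm (Fin m)) (i : ℕ) :
    pf π.symm (pf π i) = i := by
  by_cases h : i < m
  · rw [pf_of_lt π h, pf_of_lt π.symm (π ⟨i, h⟩).isLt]
    simp
  · rw [pf_of_ge π h, pf_of_ge π.symm h]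

lemma pf_pf_symm {m : ℕ} (π : Equiv.Perm (Fin m)) (i : ℕ) :
    pf π (pf π.symm i) = i := by
  simpa using pf_symm_pf π.symm i

lemma pf_sq {m : ℕ} (π : Equiv.Perm (Fin m)) (i : ℕ) :
    pf (π ^ 2) i = pf π (pf π i) := by
  by_cases h : i < m
  · have e : (π ^ 2) ⟨i, h⟩ = π (π ⟨i, h⟩) := by
      rw [pow_two]; rfl
    rw [pf_of_lt (π ^ 2) h, e, apply_eq_pf, apply_eq_pf, pf_of_lt π h]
  · rw [pf_of_ge _ h, pf_of_ge _ h, pf_of_ge _ h]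

/-- increasing up to position `k` -/
def Mono {m : ℕ} (π : Equiv.Perm (Fin m)) (k : ℕ) : Prop :=
  ∀ i j : ℕ, i < j → j ≤ k → pf π i < pf π j

/-- decreasing from position `k` on -/
def Anti {m : ℕ} (π : Equiv.Perm (Fin m)) (k : ℕ) : Prop :=
  ∀ i j : ℕ, k ≤ i → i < j → j < m → pf π j < pf π i

def UniAt {m : ℕ} (π : Equiv.Perm (Fin m)) (k : ℕ) : Prop :=
  k < m ∧ pf π k = m - 1 ∧ Mono π k ∧ Anti π k

lemma p213_apply : ∀ a : Fin 3,
    (p213 a).val = if a.val = 0 then 1 else if a.val = 1 then 0 else 2 := by decide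

lemma p312_apply : ∀ a : Fin 3,
    (p312 a).val = if a.val = 0 then 2 else if a.val = 1 then 0 else 1 := by decide

lemma fin3_cases : ∀ c : Fin 3, c.val = 0 ∨ c.val = 1 ∨ c.val = 2 := by decide

lemma contains3_iff {m : ℕ} (π : Equiv.Perm (Fin m)) (σ : Equiv.Perm (Fin 3)) :
    ContainsPat π σ ↔ ∃ x y z : ℕ, x < y ∧ y < z ∧ z < m ∧
      (∀ a b : Fin 3, σ a < σ b ↔
        pf π (if a.val = 0 then x else if a.val = 1 then y else z) <
        pf π (if b.val = 0 then x else if b.val = 1 then y else z)) := by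
  constructor
  · rintro ⟨f, hf, hiff⟩
    have h01 : (f 0).val < (f 1).val := hf (by decide)
    have h12 : (f 1).val < (f 2).val := hf (by decide)
    refine ⟨(f 0).val, (f 1).val, (f 2).val, h01, h12, (f 2).isLt, ?_⟩
    intro a b
    have key : ∀ c : Fin 3,
        pf π (if c.val = 0 then (f 0).val else if c.val = 1 then (f 1).val else (f 2).val)
          = (π (f c)).val := by
      intro c
      rcases fin3_cases c with hc | hc | hc
      · have hc' : c = 0 := Fin.ext (by simpa using hc)
        rw [if_pos hc, hc', ← apply_eq_pf]
      · have hc' : c = 1 := Fin.ext (by simpa using hc)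
        rw [if_neg (by omega), if_pos hc, hc', ← apply_eq_pf]
      · have hc' : c = 2 := Fin.ext (by simpa using hc)
        rw [if_neg (by omega), if_neg (by omega), hc', ← apply_eq_pf]
    rw [key a, key b]
    exact hiff a b
  · rintro ⟨x, y, z, h1, h2, h3, hiff⟩
    have hx : x < m := by omega
    have hy : y < m := by omega
    refine ⟨fun a => if a.val = 0 then ⟨x, hx⟩ else if a.val = 1 then ⟨y, hy⟩ else ⟨z, h3⟩,
      ?_, ?_⟩
    · intro a b hab
      have hab' : a.val < b.val := hab
      simp only [Fin.lt_def]
      split_ifs <;> simp only [] <;> omega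
    · intro a b
      simp only [Fin.lt_def, apply_ite π, apply_ite Fin.val, val_eq_pf]
      simpa only [apply_ite (pf π), Fin.lt_def] using hiff a b

lemma contains213_iff {m : ℕ} (π : Equiv.Perm (Fin m)) :
    ContainsPat π p213 ↔ ∃ x y z : ℕ, x < y ∧ y < z ∧ z < m ∧
      pf π y < pf π x ∧ pf π x < pf π z := by
  rw [contains3_iff]
  constructor
  · rintro ⟨x, y, z, h1, h2, h3, hiff⟩
    have e1 := (hiff 1 0).mp (by decide)
    have e2 := (hiff 0 2).mp (by decide)
    norm_num at e1 e2
    exact ⟨x, y, z, h1, h2, h3, e1, e2⟩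
  · rintro ⟨x, y, z, h1, h2, h3, h4, h5⟩
    refine ⟨x, y, z, h1, h2, h3, ?_⟩
    intro a b
    simp only [Fin.lt_def, p213_apply]
    split_ifs <;> omega

lemma contains312_iff {m : ℕ} (π : Equiv.Perm (Fin m)) :
    ContainsPat π p312 ↔ ∃ x y z : ℕ, x < y ∧ y < z ∧ z < m ∧
      pf π y < pf π z ∧ pf π z < pf π x := by
  rw [contains3_iff]
  constructor
  · rintro ⟨x, y, z, h1, h2, h3, hiff⟩
    have e1 := (hiff 1 2).mp (by decide)
    have e2 := (hiff 2 0).mp (by decide)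
    norm_num at e1 e2
    exact ⟨x, y, z, h1, h2, h3, e1, e2⟩
  · rintro ⟨x, y, z, h1, h2, h3, h4, h5⟩
    refine ⟨x, y, z, h1, h2, h3, ?_⟩
    intro a b
    simp only [Fin.lt_def, p312_apply]
    split_ifs <;> omega

lemma containsConsec213_iff {m : ℕ} (ρ : Equiv.Perm (Fin m)) :
    ContainsConsecPat ρ p213 ↔ ∃ i : ℕ, i + 2 < m ∧
      pf ρ (i + 1) < pf ρ i ∧ pf ρ i < pf ρ (i + 2) := by
  constructor
  · rintro ⟨i, h, hiff⟩
    have e1 := (hiff 1 0).mp (by decide)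
    have e2 := (hiff 0 2).mp (by decide)
    simp only [Fin.lt_def, val_eq_pf] at e1 e2
    norm_num at e1 e2
    exact ⟨i, by omega, e1, e2⟩
  · rintro ⟨i, h, h1, h2⟩
    refine ⟨i, by omega, ?_⟩
    intro a b
    simp only [Fin.lt_def, p213_apply, val_eq_pf]
    rcases fin3_cases a with ha | ha | ha <;> rcases fin3_cases b with hb | hb | hb <;>
      rw [ha, hb] <;> norm_num <;> omega

end S13

namespace S13

lemma avoids_iff_uniAt {m : ℕ} (hm : 1 ≤ m) (π : Equiv.Perm (Fin m)) :
    (AvoidsPat π p213 ∧ AvoidsPat π p312) ↔ ∃ k, UniAt π k := by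
  constructor
  · rintro ⟨h213, h312⟩
    have vf : ∀ i, i + 2 < m → pf π (i+1) < pf π i → pf π (i+2) < pf π (i+1) := by
      intro i h hd
      by_contra hc
      push_neg at hc
      have hne : pf π (i+1) ≠ pf π (i+2) := fun e => by have := pf_inj π e; omega
      have hlt : pf π (i+1) < pf π (i+2) := by omega
      have hne2 : pf π i ≠ pf π (i+2) := fun e => by have := pf_inj π e; omega
      rcases Nat.lt_or_ge (pf π i) (pf π (i+2)) with h1 | h1
      · exact h213 ((contains213_iff π).mpr ⟨i, i+1, i+2, by omega, by omega, h, hd, h1⟩)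
      · exact h312 ((contains312_iff π).mpr ⟨i, i+1, i+2, by omega, by omega, h, hlt, by omega⟩)
    have prop : ∀ j i, i ≤ j → j + 1 < m → pf π (i+1) < pf π i → pf π (j+1) < pf π j := by
      intro j
      induction j with
      | zero =>
        intro i hij hj hd
        have hi0 : i = 0 := by omega
        rwa [hi0] at hd
      | succ j ih =>
        intro i hij hj hd
        by_cases hji : i = j + 1
        · subst hji; exact hd
        · exact vf j (by omega) (ih i (by omega) (by omega) hd)
    set k := pf π.symm (m-1) with hkdef
    have hk : k < m := pf_lt π.symm (by omega)
    have hpk : pf π k = m - 1 := pf_pf_symm π (m-1)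
    have nodesc : ∀ i, i + 1 ≤ k → pf π i < pf π (i+1) := by
      intro i hik
      by_contra hc
      push_neg at hc
      have hne : pf π i ≠ pf π (i+1) := fun e => by have := pf_inj π e; omega
      have hd : pf π (i+1) < pf π i := by omega
      have hdk : pf π k < pf π (k-1) := by
        have := prop (k-1) i (by omega) (by omega) hd
        have e : k - 1 + 1 = k := by omega
        rwa [e] at this
      have := pf_lt π (show k - 1 < m by omega)
      omega
    have mono : Mono π k := by
      intro i j hij hjk
      induction j with
      | zero => omega
      | succ j ih =>
        by_cases hji : i = j
        · subst hji; exact nodesc i hjk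
        · exact lt_trans (ih (by omega) (by omega)) (nodesc j hjk)
    have anti : Anti π k := by
      have kdesc : ∀ j, k ≤ j → j + 1 < m → pf π (j+1) < pf π j := by
        intro j hkj hj
        apply prop j k hkj hj
        have h1 : pf π (k+1) < m := pf_lt π (by omega)
        have hne : pf π (k+1) ≠ pf π k := fun e => by have := pf_inj π e; omega
        omega
      intro i j hki hij hjm
      induction j with
      | zero => omega
      | succ j ih =>
        by_cases hji : i = j
        · subst hji; exact kdesc i hki (by omega)
        · exact lt_trans (kdesc j (by omega) (by omega)) (ih (by omega) (by omega))
    exact ⟨k, hk, hpk, mono, anti⟩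
  · rintro ⟨k, hk, hpk, mono, anti⟩
    constructor
    · intro hcon
      obtain ⟨x, y, z, h1, h2, h3, h4, h5⟩ := (contains213_iff π).mp hcon
      rcases le_or_gt y k with hy | hy
      · have := mono x y h1 hy; omega
      · have := anti y z (by omega) h2 h3; omega
    · intro hcon
      obtain ⟨x, y, z, h1, h2, h3, h4, h5⟩ := (contains312_iff π).mp hcon
      rcases le_or_gt y k with hy | hy
      · have := mono x y h1 hy; omega
      · have := anti y z (by omega) h2 h3; omega

lemma plb {m : ℕ} {π : Equiv.Perm (Fin m)} {k : ℕ} (mono : Mono π k) :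
    ∀ i, i ≤ k → i ≤ pf π i := by
  intro i
  induction i with
  | zero => omega
  | succ i ih =>
    intro h
    have := ih (by omega)
    have := mono i (i+1) (by omega) h
    omega

lemma id_down {m : ℕ} {π : Equiv.Perm (Fin m)} {k : ℕ} (mono : Mono π k) {x : ℕ}
    (hx : x ≤ k) (hfix : pf π x = x) : ∀ y, y ≤ x → pf π y = y := by
  have key : ∀ d, d ≤ x → pf π (x - d) = x - d := by
    intro d
    induction d with
    | zero => intro _; simpa using hfix
    | succ d ih =>
      intro hd
      have h1 := ih (by omega)
      have h2 := mono (x - (d+1)) (x - d) (by omega) (by omega)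
      have h3 := plb mono (x - (d+1)) (by omega)
      omega
  intro y hy
  have := key (x - y) (by omega)
  have e : x - (x - y) = y := by omega
  rwa [e] at this

/-- the position of the maximum determines uniqueness of `k` in `UniAt` -/
lemma uniAt_k_eq {m : ℕ} {π : Equiv.Perm (Fin m)} {k : ℕ} (h : UniAt π k) :
    k = pf π.symm (m - 1) := by
  obtain ⟨hk, hpk, _, _⟩ := h
  have := pf_symm_pf π k
  rw [hpk] at this
  omega

end S13

namespace S13

/-- In the bad case (tail of size ≥ 2 not starting with m-2), π² has a consecutive 213. -/
lemma bad_occ {m : ℕ} {π : Equiv.Perm (Fin m)} {k : ℕ} (h : UniAt π k)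
    (hk3 : k + 3 ≤ m) (hb : pf π (k+1) ≠ m - 2) :
    ∃ i, i + 2 < m ∧ pf π (pf π (i+1)) < pf π (pf π i) ∧
      pf π (pf π i) < pf π (pf π (i+2)) := by
  obtain ⟨hk, hpk, mono, anti⟩ := h
  have hm3 : 3 ≤ m := by omega
  -- position of the value m-2
  set x0 := pf π.symm (m-2) with hx0def
  have hx0 : x0 < m := pf_lt π.symm (by omega)
  have hpx0 : pf π x0 = m-2 := pf_pf_symm π (m-2)
  have hx0k : x0 ≠ k := by
    intro e; rw [e, hpk] at hpx0; omega
  have hx0k1 : x0 ≠ k + 1 := by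
    intro e; rw [← e] at hb; exact hb hpx0
  -- x0 = k - 1 and k ≥ 1
  have hpk1 : pf π (k+1) < m - 1 := by
    have h1 : pf π (k+1) < m := pf_lt π (by omega)
    have h2 : pf π (k+1) ≠ m - 1 := by
      intro e; rw [← hpk] at e; have := pf_inj π e; omega
    omega
  have hx0small : x0 < k := by
    by_contra hc
    push_neg at hc
    have hx02 : k + 2 ≤ x0 := by omega
    have := anti (k+1) x0 (by omega) (by omega) hx0
    omega
  have hx0eq : x0 = k - 1 := by
    by_contra hc
    have h1 := mono x0 (k-1) (by omega) (by omega)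
    have h2 := mono (k-1) k (by omega) (by omega)
    rw [hpk, hpx0] at *
    omega
  have hk1 : 1 ≤ k := by
    rcases Nat.eq_zero_or_pos k with h0 | h0
    · rw [h0] at hx0small; omega
    · exact h0
  -- B := max tail value
  set B := pf π (k+1) with hBdef
  have hBm : B < m := pf_lt π (by omega)
  have hB3 : B ≤ m - 3 := by omega
  -- the occurrence at i = k - 1
  refine ⟨k - 1, by omega, ?_, ?_⟩
  · -- q(k) < q(k-1):  pf π (m-1) < pf π (m-2)
    have e1 : k - 1 + 1 = k := by omega
    rw [e1, hpk]
    have e2 : pf π (k-1) = m - 2 := by rw [← hx0eq]; exact hpx0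
    rw [e2]
    exact anti (m-2) (m-1) (by omega) (by omega) (by omega)
  · -- q(k-1) < q(k+1):  pf π (m-2) < pf π B
    have e1 : k - 1 + 2 = k + 1 := by omega
    rw [e1]
    have e2 : pf π (k-1) = m - 2 := by rw [← hx0eq]; exact hpx0
    rw [e2, ← hBdef]
    rcases le_or_gt B k with hBk | hBk
    · -- B in the ascending zone
      have h1 : B ≤ pf π B := plb mono B hBk
      have h2 : pf π (m-2) ≤ B := by
        rcases Nat.lt_or_ge (k+1) (m-2) with hc | hc
        · have := anti (k+1) (m-2) (by omega) (by omega) (by omega)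
          omega
        · have e3 : k + 1 = m - 2 := by omega
          rw [hBdef, e3]
        
      have h3 : pf π B ≠ pf π (m-2) := by
        intro e; have := pf_inj π e; omega
      omega
    · -- B in the tail zone, B ≤ m-3 < m-2
      exact anti B (m-2) (by omega) (by omega) (by omega)

/-- If the tail starts with the value m-2, π² has no consecutive 213. -/
lemma good_of_top {m : ℕ} {π : Equiv.Perm (Fin m)} {k : ℕ} (h : UniAt π k)
    (hk1 : k + 1 < m) (htop : pf π (k+1) = m - 2) :
    ∀ i, i + 2 < m → ¬(pf π (pf π (i+1)) < pf π (pf π i) ∧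
      pf π (pf π i) < pf π (pf π (i+2))) := by
  obtain ⟨hk, hpk, mono, anti⟩ := h
  have hm2 : 2 ≤ m := by omega
  rintro i hi ⟨o1, o2⟩
  set x := pf π i with hxdef
  set y := pf π (i+1) with hydef
  set z := pf π (i+2) with hzdef
  have hxm : x < m := pf_lt π (by omega)
  have hym : y < m := pf_lt π (by omega)
  have hzm : z < m := pf_lt π (by omega)
  rcases Nat.lt_or_ge (i+2) (k+1) with hc1 | hc1
  · -- case i+2 ≤ k
    have hxy : x < y := mono i (i+1) (by omega) (by omega)
    have hyz : y < z := mono (i+1) (i+2) (by omega) (by omega)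
    rcases le_or_gt y k with hyk | hyk
    · have := mono x y hxy hyk
      omega
    · have := anti y z (by omega) hyz hzm
      omega
  rcases Nat.lt_or_ge i k with hc2 | hc2
  · -- case i + 1 = k
    have hik : i = k - 1 ∧ 1 ≤ k := by omega
    have e1 : i + 1 = k := by omega
    have e2 : i + 2 = k + 1 := by omega
    have hy' : y = m - 1 := by rw [hydef, e1, hpk]
    have hz' : z = m - 2 := by rw [hzdef, e2, htop]
    have hxlt : x < m - 1 := by
      have := mono i (i+1) (by omega) (by omega)
      rw [← hydef] at this  -- x < y
      omega
    have hxne : x ≠ m - 2 := by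
      intro e
      have : pf π i = pf π (k+1) := by rw [htop, ← e, hxdef]
      have := pf_inj π this
      omega
    rcases lt_or_ge k (m-2) with hkm | hkm
    · -- k ≤ m - 3
      rcases le_or_gt x k with hxk | hxk
      · -- x ≤ k
        have hxlb : k - 1 ≤ x := by
          have h1 : k - 1 ≤ pf π (k-1) := plb mono (k-1) (by omega)
          have h2 : pf π (k - 1) = x := by rw [hxdef]; congr 1; omega
          omega
        rcases Nat.lt_or_ge x k with hxk' | hxk'
        · -- x = k - 1 : π fixes [0, k-1]
          have hveq : pf π x = x := by
            have hxi : x = i := by omega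
            rw [hxi, ← hxdef]; exact hxi
          have hid := id_down mono (show x ≤ k by omega) hveq
          have o1' : pf π (m-1) < x := by
            have e3 : pf π y = pf π (m-1) := by rw [hy']
            rw [e3, hveq] at o1
            exact o1
          have h5 := hid (pf π (m-1)) (by omega)
          have h6 := pf_inj π h5
          omega
        · -- x = k: q(i) = m-1, contradiction with o2
          have hpxm : pf π x = m - 1 := by
            have : x = k := by omega
            rw [this, hpk]
          have hq2 : pf π z < m := pf_lt π hzm
          omega
      · -- x ≥ k+1, x ≤ m-3 : anti x (m-2) gives pf(m-2) < pf x, contra o2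
        have := anti x (m-2) (by omega) (by omega) (by omega)
        rw [hz'] at o2
        omega
    · -- k = m - 2
      have hxne2 : pf π x ≠ m - 1 := by
        intro e
        rw [← hpk] at e
        have := pf_inj π e
        omega
      have hpx : pf π x < m := pf_lt π (by omega)
      have hq1 : pf π y = m - 2 := by rw [hy', show m - 1 = k + 1 by omega, htop]
      rw [hq1] at o1
      omega
  · rcases Nat.eq_or_lt_of_le hc2 with hc3 | hc3
    · -- case i = k : q(i) = pf π (m-1), q(i+1) = pf π (m-2), anti gives q(i) < q(i+1), contra o1
      have e0 : i = k := by omega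
      have hy' : y = m - 2 := by rw [hydef, show i + 1 = k + 1 by omega, htop]
      have hx' : x = m - 1 := by rw [hxdef, e0, hpk]
      have : pf π (m-1) < pf π (m-2) := anti (m-2) (m-1) (by omega) (by omega) (by omega)
      rw [hx', hy'] at o1
      omega
    · -- case i ≥ k+1 : x > y > z by anti
      have hxy : y < x := anti i (i+1) (by omega) (by omega) (by omega)
      have hyz : z < y := anti (i+1) (i+2) (by omega) (by omega) (by omega)
      rcases Nat.lt_trichotomy x k with hxk | hxk | hxk
      · -- z < y < x ≤ k: mono z y gives pf z < pf y; chain contradiction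
        have h1 := mono z y hyz (by omega)
        omega
      · -- x = k: q(i) = m-1
        have : pf π x = m - 1 := by rw [hxk, hpk]
        have := pf_lt π hzm
        omega
      · rcases le_or_gt k y with hyk | hyk
        · -- y ≥ k: anti y x: pf x < pf y contra o1
          have := anti y x hyk hxy hxm
          omega
        · -- y ≤ k-1: mono z y: pf z < pf y, chain contradiction with o1 o2
          have := mono z y hyz (by omega)
          omega

end S13

namespace S13

lemma struct_id {m : ℕ} {π : Equiv.Perm (Fin m)} {k : ℕ} (h : UniAt π k)
    (hk : k + 1 = m) : ∀ x, x < m → pf π x = x := by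
  obtain ⟨hkm, hpk, mono, anti⟩ := h
  have hfix : pf π k = k := by omega
  intro x hx
  exact id_down mono (le_refl k) hfix x (by omega)

lemma struct_k2 {m : ℕ} {π : Equiv.Perm (Fin m)} {k : ℕ} (h : UniAt π k)
    (hk2 : k + 2 = m) :
    pf π (m-1) ≤ m - 2 ∧
      ∀ x, x + 2 ≤ m → pf π x = if x < pf π (m-1) then x else x + 1 := by
  obtain ⟨hkm, hpk, mono, anti⟩ := h
  set j := pf π (m-1) with hjdef
  have hjm : j < m := pf_lt π (by omega)
  have hjne : j ≠ m - 1 := by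
    intro e
    rw [← hpk] at e
    have := pf_inj π e
    omega
  have hjle : j ≤ m - 2 := by omega
  have ub : ∀ d, d ≤ k → pf π (k - d) ≤ k + 1 - d := by
    intro d
    induction d with
    | zero => intro _; simp only [Nat.sub_zero]; omega
    | succ d ih =>
      intro hd
      have h1 := ih (by omega)
      have h2 := mono (k - (d+1)) (k - d) (by omega) (by omega)
      omega
  have ub' : ∀ x, x ≤ k → pf π x ≤ x + 1 := by
    intro x hx
    have := ub (k - x) (by omega)
    have e : k - (k - x) = x := by omega
    rw [e] at this
    omega
  have nej : ∀ x, x ≤ k → pf π x ≠ j := by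
    intro x hx e
    rw [hjdef] at e
    have := pf_inj π e
    omega
  have propA : ∀ x, x ≤ k → pf π x = x + 1 → ∀ d, x + d ≤ k → pf π (x + d) = x + d + 1 := by
    intro x hx he d
    induction d with
    | zero => intro _; simpa using he
    | succ d ih =>
      intro hd
      have h1 := ih (by omega)
      have h2 := mono (x + d) (x + d + 1) (by omega) (by omega)
      have h3 := ub' (x + d + 1) (by omega)
      have e : x + (d + 1) = x + d + 1 := by omega
      rw [e]
      omega
  refine ⟨hjle, ?_⟩
  intro x hx
  have hxk : x ≤ k := by omega
  have hlb := plb mono x hxk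
  have hub := ub' x hxk
  have hne := nej x hxk
  rcases Nat.lt_or_ge x j with hxj | hxj
  · rw [if_pos hxj]
    by_contra hc
    have he : pf π x = x + 1 := by omega
    have h1 := propA x hxk he (j - 1 - x) (by omega)
    have e : x + (j - 1 - x) = j - 1 := by omega
    rw [e] at h1
    have : pf π (j - 1) = pf π (m - 1) := by rw [← hjdef]; omega
    have := pf_inj π this
    omega
  · rw [if_neg (by omega)]
    by_contra hc
    have he : pf π x = x := by omega
    have h1 := id_down mono hxk he j hxj
    have : pf π j = pf π (m - 1) := by rw [← hjdef, h1]
    have := pf_inj π this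
    omega

lemma good_of_big {m : ℕ} {π : Equiv.Perm (Fin m)} {k : ℕ} (h : UniAt π k)
    (hbig : m ≤ k + 2) :
    ∀ i, i + 2 < m → ¬(pf π (pf π (i+1)) < pf π (pf π i) ∧
      pf π (pf π i) < pf π (pf π (i+2))) := by
  have hkm := h.1
  rintro i hi ⟨o1, o2⟩
  rcases Nat.eq_or_lt_of_le hbig with hcase | hcase
  · -- k + 2 = m
    obtain ⟨hjle, hstruct⟩ := struct_k2 h hcase.symm
    set j := pf π (m-1) with hjdef
    have qval : ∀ w, w < m →
        (w = m - 1 ∧ pf π (pf π w) = j + 1) ∨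
        (w = m - 2 ∧ pf π (pf π w) = j) ∨
        (w + 2 ≤ m ∧ w < j ∧ pf π (pf π w) = w) ∨
        (w + 3 ≤ m ∧ j ≤ w ∧ pf π (pf π w) = w + 2) := by
      intro w hw
      rcases Nat.eq_or_lt_of_le (show w + 1 ≤ m by omega) with hw1 | hw1
      · -- w = m - 1
        left
        refine ⟨by omega, ?_⟩
        have e1 : pf π w = j := by rw [hjdef]; congr 1; omega
        rw [e1]
        have e2 := hstruct j (by omega)
        rw [if_neg (by omega)] at e2
        exact e2
      · have hw2 : w + 2 ≤ m := by omega
        have e1 := hstruct w hw2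
        rcases Nat.lt_or_ge w j with hwj | hwj
        · -- w < j : pf w = w, pf (pf w) = w
          rw [if_pos hwj] at e1
          right; right; left
          exact ⟨hw2, hwj, by rw [e1, e1]⟩
        · rw [if_neg (by omega)] at e1
          rcases Nat.eq_or_lt_of_le hw2 with hw3 | hw3
          · -- w = m - 2 : pf w = m - 1, pf (pf w) = j
            right; left
            refine ⟨by omega, ?_⟩
            rw [e1, show w + 1 = m - 1 by omega, ← hjdef]
          · -- w ≤ m - 3 : pf w = w + 1, pf (w+1) = w + 2 since j ≤ w < w + 1
            right; right; right
            refine ⟨by omega, hwj, ?_⟩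
            rw [e1]
            have e2 := hstruct (w+1) (by omega)
            rw [if_neg (by omega)] at e2
            rw [e2]
      
    have q0 := qval i (by omega)
    have q1 := qval (i+1) (by omega)
    have q2 := qval (i+2) (by omega)
    rcases q0 with ⟨h1,h2⟩|⟨h1,h2⟩|⟨h1,h1',h2⟩|⟨h1,h1',h2⟩ <;>
      rcases q1 with ⟨g1,g2⟩|⟨g1,g2⟩|⟨g1,g1',g2⟩|⟨g1,g1',g2⟩ <;>
        rcases q2 with ⟨f1,f2⟩|⟨f1,f2⟩|⟨f1,f1',f2⟩|⟨f1,f1',f2⟩ <;>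
          rw [h2, g2] at o1 <;> rw [h2, f2] at o2 <;> omega
  · -- k + 1 = m : identity
    have hid := struct_id h (by omega)
    have a1 := hid i (by omega)
    have a2 := hid (i+1) (by omega)
    have a3 := hid (pf π i) (pf_lt π (by omega))
    have a4 := hid (pf π (i+1)) (pf_lt π (by omega))
    omega

/-- Full classification of the good permutations. -/
lemma classify {m : ℕ} (hm : 2 ≤ m) (π : Equiv.Perm (Fin m)) :
    (AvoidsPat π p213 ∧ AvoidsPat π p312 ∧ AvoidsConsecPat (π ^ 2) p213) ↔
      (∃ k, UniAt π k ∧ (m ≤ k + 2 ∨ (k + 3 ≤ m ∧ pf π (k+1) = m - 2))) := by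
  constructor
  · rintro ⟨h1, h2, h3⟩
    obtain ⟨k, hk⟩ := (avoids_iff_uniAt (by omega) π).mp ⟨h1, h2⟩
    refine ⟨k, hk, ?_⟩
    rcases le_or_gt m (k+2) with hc | hc
    · exact Or.inl hc
    · refine Or.inr ⟨by omega, ?_⟩
      by_contra hb
      obtain ⟨i, hi, ho1, ho2⟩ := bad_occ hk (by omega) hb
      exact h3 ((containsConsec213_iff (π^2)).mpr
        ⟨i, hi, by rw [pf_sq, pf_sq]; exact ho1, by rw [pf_sq, pf_sq]; exact ho2⟩)
  · rintro ⟨k, hk, hcase⟩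
    have havoid := (avoids_iff_uniAt (by omega) π).mpr ⟨k, hk⟩
    refine ⟨havoid.1, havoid.2, ?_⟩
    intro hcon
    obtain ⟨i, hi, ho1, ho2⟩ := (containsConsec213_iff (π^2)).mp hcon
    simp only [pf_sq] at ho1 ho2
    rcases hcase with hbig | ⟨hk3, htop⟩
    · exact good_of_big hk hbig i hi ⟨ho1, ho2⟩
    · exact good_of_top hk (by omega) htop i hi ⟨ho1, ho2⟩

end S13

namespace S13

/-- A unimodal permutation is determined by its peak position and which values lie
in the ascending part. -/
lemma uniAt_unique {m : ℕ} {π₁ π₂ : Equiv.Perm (Fin m)} {k : ℕ}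
    (h1 : UniAt π₁ k) (h2 : UniAt π₂ k)
    (hiff : ∀ v, v < m → (pf π₁.symm v ≤ k ↔ pf π₂.symm v ≤ k)) : π₁ = π₂ := by
  obtain ⟨hk1, hpk1, mono1, anti1⟩ := h1
  obtain ⟨hk2, hpk2, mono2, anti2⟩ := h2
  have claim1 : ∀ i, i ≤ k → pf π₁ i = pf π₂ i := by
    intro i
    induction i using Nat.strong_induction_on with
    | _ i IH =>
      intro hik
      set v := pf π₁ i with hv
      have hvm : v < m := pf_lt π₁ (by omega)
      set a := pf π₂.symm v with ha
      have ham : a < m := pf_lt π₂.symm hvm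
      have hπ₂a : pf π₂ a = v := pf_pf_symm π₂ v
      have hak : a ≤ k := by
        have hpos1 : pf π₁.symm v = i := by rw [hv, pf_symm_pf]
        have := (hiff v hvm).mp (by omega)
        omega
      set w := pf π₂ i with hw
      have hwm : w < m := pf_lt π₂ (by omega)
      set b := pf π₁.symm w with hb
      have hbm : b < m := pf_lt π₁.symm hwm
      have hπ₁b : pf π₁ b = w := pf_pf_symm π₁ w
      have hbk : b ≤ k := by
        have hpos2 : pf π₂.symm w = i := by rw [hw, pf_symm_pf]
        have := (hiff w hwm).mpr (by omega)
        omega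
      rcases Nat.lt_trichotomy a i with hai | hai | hai
      · exfalso
        have e1 : pf π₂ a = pf π₁ a := (IH a hai (by omega)).symm
        have e2 : pf π₁ a = pf π₁ i := by rw [← e1, hπ₂a, hv]
        have := pf_inj π₁ e2
        omega
      · exact (hai ▸ hπ₂a).symm
      · rcases Nat.lt_trichotomy b i with hbi | hbi | hbi
        · exfalso
          have e1 : pf π₁ b = pf π₂ b := IH b hbi (by omega)
          have e2 : pf π₂ b = pf π₂ i := by rw [← e1, hπ₁b, hw]
          have := pf_inj π₂ e2
          omega
        · rw [hbi] at hπ₁b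
          exact hπ₁b
        · exfalso
          have g1 : pf π₂ i < pf π₂ a := mono2 i a hai hak
          have g2 : pf π₁ i < pf π₁ b := mono1 i b hbi hbk
          rw [hπ₂a] at g1
          rw [hπ₁b] at g2
          omega
  have claim2 : ∀ d i, i = m - 1 - d → k < i → pf π₁ i = pf π₂ i := by
    intro d
    induction d using Nat.strong_induction_on with
    | _ d IH =>
      intro i hid hki
      have him : i < m := by omega
      set v := pf π₁ i with hv
      have hvm : v < m := pf_lt π₁ him
      set a := pf π₂.symm v with ha
      have ham : a < m := pf_lt π₂.symm hvm
      have hπ₂a : pf π₂ a = v := pf_pf_symm π₂ v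
      have hak : k < a := by
        have hpos1 : pf π₁.symm v = i := by rw [hv, pf_symm_pf]
        by_contra hc
        have := (hiff v hvm).mpr (by omega)
        omega
      set w := pf π₂ i with hw
      have hwm : w < m := pf_lt π₂ him
      set b := pf π₁.symm w with hb
      have hbm : b < m := pf_lt π₁.symm hwm
      have hπ₁b : pf π₁ b = w := pf_pf_symm π₁ w
      have hbk : k < b := by
        have hpos2 : pf π₂.symm w = i := by rw [hw, pf_symm_pf]
        by_contra hc
        have := (hiff w hwm).mp (by omega)
        omega
      rcases Nat.lt_trichotomy a i with hai | hai | hai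
      · rcases Nat.lt_trichotomy b i with hbi | hbi | hbi
        · exfalso
          have g1 : pf π₂ i < pf π₂ a := anti2 a i (by omega) hai him
          have g2 : pf π₁ i < pf π₁ b := anti1 b i (by omega) hbi him
          rw [hπ₂a] at g1
          rw [hπ₁b] at g2
          omega
        · rw [hbi] at hπ₁b
          exact hπ₁b
        · exfalso
          have e1 : pf π₁ b = pf π₂ b := IH (m - 1 - b) (by omega) b (by omega) (by omega)
          have e2 : pf π₂ b = pf π₂ i := by rw [← e1, hπ₁b, hw]
          have := pf_inj π₂ e2
          omega
      · exact (hai ▸ hπ₂a).symm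
      · exfalso
        have e1 : pf π₂ a = pf π₁ a := (IH (m - 1 - a) (by omega) a (by omega) (by omega)).symm
        have e2 : pf π₁ a = pf π₁ i := by rw [← e1, hπ₂a, hv]
        have := pf_inj π₁ e2
        omega
  apply Equiv.ext
  intro x
  apply Fin.ext
  rw [apply_eq_pf, apply_eq_pf]
  rcases le_or_gt x.val k with hx | hx
  · exact claim1 x.val hx
  · exact claim2 (m - 1 - x.val) x.val (by have := x.isLt; omega) hx

end S13

namespace S13

/-- the permutation (0,1,...,ĵ,...,m-1,j) : increasing with j moved to the end -/
def F {m : ℕ} (j : Fin m) : Equiv.Perm (Fin m) where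
  toFun x := ⟨if x.val = m - 1 then j.val else if x.val < j.val then x.val else x.val + 1,
    by have := x.isLt; have := j.isLt; split_ifs <;> omega⟩
  invFun y := ⟨if y.val = j.val then m - 1 else if y.val < j.val then y.val else y.val - 1,
    by have := y.isLt; have := j.isLt; split_ifs <;> omega⟩
  left_inv := by
    intro x
    have hx := x.isLt
    have hj := j.isLt
    apply Fin.ext
    simp only []
    split_ifs <;> omega
  right_inv := by
    intro y
    have hy := y.isLt
    have hj := j.isLt
    apply Fin.ext
    simp only []
    split_ifs <;> omega

lemma F_pf {m : ℕ} (j : Fin m) {x : ℕ} (hx : x < m) :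
    pf (F j) x = if x = m - 1 then j.val else if x < j.val then x else x + 1 := by
  rw [pf_of_lt _ hx]
  rfl

lemma F_last {m : ℕ} (j : Fin m) : pf (F j) (m - 1) = j.val := by
  have hj := j.isLt
  rw [F_pf j (by omega), if_pos rfl]

/-- F j is unimodal with large peak -/
lemma F_R1 {m : ℕ} (j : Fin m) : ∃ k, UniAt (F j) k ∧ m ≤ k + 2 := by
  have hj := j.isLt
  rcases Nat.eq_or_lt_of_le (show j.val + 1 ≤ m by omega) with hjm | hjm
  · -- j = m-1 : identity, peak at m-1
    refine ⟨m - 1, ⟨by omega, ?_, ?_, ?_⟩, by omega⟩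
    · rw [F_last]; omega
    · intro x y hxy hyk
      rw [F_pf j (by omega), F_pf j (by omega)]
      split_ifs <;> omega
    · intro x y hkx hxy hym
      omega
  · -- j < m-1 : peak at m-2
    refine ⟨m - 2, ⟨by omega, ?_, ?_, ?_⟩, by omega⟩
    · rw [F_pf j (by omega)]
      split_ifs <;> omega
    · intro x y hxy hyk
      rw [F_pf j (by omega), F_pf j (by omega)]
      split_ifs <;> omega
    · intro x y hkx hxy hym
      have hx2 : x = m - 2 ∧ y = m - 1 := by omega
      rw [F_pf j (by omega), F_pf j (by omega), if_pos (by omega), if_neg (by omega),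
        if_neg (by omega)]
      omega

lemma R1_eq_F {m : ℕ} {π : Equiv.Perm (Fin m)} {k : ℕ} (h : UniAt π k) (hbig : m ≤ k + 2) :
    π = F (π ⟨m - 1, by have := h.1; omega⟩) := by
  have hkm := h.1
  have hjval : (π ⟨m - 1, by omega⟩).val = pf π (m - 1) := apply_eq_pf π _
  set j := π ⟨m - 1, by have := h.1; omega⟩ with hjdef
  have hj := j.isLt
  apply Equiv.ext
  intro x
  have hx := x.isLt
  apply Fin.ext
  rw [apply_eq_pf]
  have hrhs : ((F j) x).val =
      if x.val = m - 1 then j.val else if x.val < j.val then x.val else x.val + 1 := rfl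
  rw [hrhs]
  rcases Nat.eq_or_lt_of_le hbig with hcase | hcase
  · -- k = m - 2
    obtain ⟨hjle, hstruct⟩ := struct_k2 h hcase.symm
    rcases Nat.eq_or_lt_of_le (show x.val + 1 ≤ m by omega) with hxm | hxm
    · rw [if_pos (by omega), hjval]
      congr 1
      omega
    · rw [if_neg (by omega)]
      have := hstruct x.val (by omega)
      rw [hjval] at *
      rw [this]
  · -- k = m - 1 : identity and j = m-1
    have hid := struct_id h (by omega)
    have hjm : j.val = m - 1 := by rw [hjval, hid (m-1) (by omega)]
    rw [hid x.val hx]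
    split_ifs <;> omega

lemma F_inj {m : ℕ} : Function.Injective (F (m := m)) := by
  intro j1 j2 he
  have hj := j1.isLt
  have h1 := F_last j1
  have h2 := F_last j2
  rw [he] at h1
  rw [h1] at h2
  exact Fin.ext h2

lemma card_R1 {m : ℕ} (hm : 1 ≤ m) :
    Nat.card {π : Equiv.Perm (Fin m) // ∃ k, UniAt π k ∧ m ≤ k + 2} = m := by
  have e : Fin m ≃ {π : Equiv.Perm (Fin m) // ∃ k, UniAt π k ∧ m ≤ k + 2} := by
    apply Equiv.ofBijective (fun j => ⟨F j, F_R1 j⟩)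
    constructor
    · intro j1 j2 he
      exact F_inj (congrArg Subtype.val he)
    · rintro ⟨π, k, hk, hbig⟩
      exact ⟨π ⟨m - 1, by have := hk.1; omega⟩, by
        apply Subtype.ext
        exact (R1_eq_F hk hbig).symm⟩
  exact Nat.card_eq_of_equiv_fin e.symm
end S13

namespace S13

section Psi

variable {m : ℕ} (hm : 3 ≤ m) (T : Finset (Fin (m-2)))

/-- the tail value set, as a subset of Fin m, together with m-2 -/
def ST : Finset (Fin m) :=
  insert ⟨m-2, by omega⟩ (T.map (Fin.castLEEmb (by omega)))

lemma mem_ST {v : Fin m} :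
    v ∈ ST hm T ↔ (v.val = m - 2 ∨ ∃ w ∈ T, v.val = w.val) := by
  simp only [ST, Finset.mem_insert, Finset.mem_map, Fin.castLEEmb, Fin.ext_iff]
  constructor
  · rintro (h | ⟨w, hw, he⟩)
    · exact Or.inl h
    · right
      refine ⟨w, hw, ?_⟩
      rw [← he]
      simp
  · rintro (h | ⟨w, hw, he⟩)
    · exact Or.inl h
    · right
      exact ⟨w, hw, by simp [Fin.ext_iff, he.symm]⟩

lemma mem_ST_lt {v : Fin m} (h : v ∈ ST hm T) : v.val ≤ m - 2 := by
  rw [mem_ST] at h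
  rcases h with h | ⟨w, hw, he⟩
  · omega
  · have := w.isLt; omega

lemma card_ST : (ST hm T).card = T.card + 1 := by
  rw [ST, Finset.card_insert_of_notMem, Finset.card_map]
  intro hmem
  simp only [Finset.mem_map, Fin.castLEEmb] at hmem
  obtain ⟨w, hw, he⟩ := hmem
  have := w.isLt
  have : ((⟨m-2, by omega⟩ : Fin m)).val = w.val := by rw [← he]; simp
  simp at this
  omega

lemma tcard_le : T.card ≤ m - 2 := by
  have := Finset.card_le_univ T
  simpa using this

lemma card_CT : (ST hm T)ᶜ.card = (m - 2 - T.card) + 1 := by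
  rw [Finset.card_compl, card_ST, Fintype.card_fin]
  have := tcard_le T
  omega

/-- the unimodal permutation with tail values T ∪ {m-2} (as a raw function) -/
noncomputable def psifun (x : Fin m) : Fin m :=
  if hx : x.val ≤ m - 2 - T.card then
    ((((ST hm T)ᶜ).orderIsoOfFin (card_CT hm T)) ⟨x.val, by omega⟩ : Fin m)
  else
    (((ST hm T).orderIsoOfFin (card_ST hm T))
      ⟨m - 1 - x.val, by have := x.isLt; have := tcard_le T; omega⟩ : Fin m)

lemma psifun_inj : Function.Injective (psifun hm T) := by
  intro x y he
  rw [psifun, psifun] at he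
  have hxm := x.isLt
  have hym := y.isLt
  by_cases hx : x.val ≤ m - 2 - T.card <;> by_cases hy : y.val ≤ m - 2 - T.card
  · rw [dif_pos hx, dif_pos hy] at he
    have := (((ST hm T)ᶜ).orderIsoOfFin (card_CT hm T)).injective (Subtype.coe_injective he)
    apply Fin.ext
    simpa [Fin.ext_iff] using this
  · rw [dif_pos hx, dif_neg hy] at he
    exfalso
    have h1 := ((((ST hm T)ᶜ).orderIsoOfFin (card_CT hm T)) ⟨x.val, by omega⟩).2
    have h2 := (((ST hm T).orderIsoOfFin (card_ST hm T))
      ⟨m - 1 - y.val, by have := tcard_le T; omega⟩).2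
    rw [he] at h1
    rw [Finset.mem_compl] at h1
    exact h1 h2
  · rw [dif_neg hx, dif_pos hy] at he
    exfalso
    have h1 := ((((ST hm T)ᶜ).orderIsoOfFin (card_CT hm T)) ⟨y.val, by omega⟩).2
    have h2 := (((ST hm T).orderIsoOfFin (card_ST hm T))
      ⟨m - 1 - x.val, by have := tcard_le T; omega⟩).2
    rw [← he] at h1
    rw [Finset.mem_compl] at h1
    exact h1 h2
  · rw [dif_neg hx, dif_neg hy] at he
    have := ((ST hm T).orderIsoOfFin (card_ST hm T)).injective (Subtype.coe_injective he)
    have hv : m - 1 - x.val = m - 1 - y.val := by simpa [Fin.ext_iff] using this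
    apply Fin.ext
    omega

/-- the unimodal permutation with tail values T ∪ {m-2} -/
noncomputable def Psi : Equiv.Perm (Fin m) :=
  Equiv.ofBijective (psifun hm T) (Finite.injective_iff_bijective.mp (psifun_inj hm T))

lemma psi_pf {x : ℕ} (hx : x < m) :
    pf (Psi hm T) x = ((psifun hm T) ⟨x, hx⟩).val := by
  rw [pf_of_lt _ hx]
  rfl

lemma psi_pf_le {x : ℕ} (hx : x < m) (hxk : x ≤ m - 2 - T.card) :
    pf (Psi hm T) x =
      ((((ST hm T)ᶜ).orderIsoOfFin (card_CT hm T)) ⟨x, by omega⟩ : Fin m).val := by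
  rw [psi_pf hm T hx, psifun, dif_pos hxk]

lemma psi_pf_gt {x : ℕ} (hx : x < m) (hxk : ¬ x ≤ m - 2 - T.card) :
    pf (Psi hm T) x =
      (((ST hm T).orderIsoOfFin (card_ST hm T))
        ⟨m - 1 - x, by have := tcard_le T; omega⟩ : Fin m).val := by
  rw [psi_pf hm T hx, psifun, dif_neg hxk]

lemma psi_peak : pf (Psi hm T) (m - 2 - T.card) = m - 1 := by
  have htc := tcard_le T
  rw [psi_pf_le hm T (by omega) (le_refl _)]
  -- the k-th element of the complement is its maximum, which is m-1
  have hmem : (⟨m-1, by omega⟩ : Fin m) ∈ (ST hm T)ᶜ := by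
    rw [Finset.mem_compl]
    intro hc
    have := mem_ST_lt hm T hc
    simp at this
    omega
  set iso := (((ST hm T)ᶜ).orderIsoOfFin (card_CT hm T))
  obtain ⟨i0, hi0⟩ := iso.surjective ⟨⟨m-1, by omega⟩, hmem⟩
  have hmono : iso i0 ≤ iso ⟨m - 2 - T.card, by omega⟩ := by
    apply iso.monotone
    have := i0.isLt
    exact Fin.mk_le_mk.mpr (by omega)
  rw [hi0] at hmono
  have h1 : (m : ℕ) - 1 ≤ ((iso ⟨m - 2 - T.card, by omega⟩ : {v // v ∈ (ST hm T)ᶜ}) : Fin m).val := by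
    exact hmono
  have h2 := ((iso ⟨m - 2 - T.card, by omega⟩ : {v // v ∈ (ST hm T)ᶜ}) : Fin m).isLt
  omega

lemma psi_second : pf (Psi hm T) (m - 2 - T.card + 1) = m - 2 := by
  have htc := tcard_le T
  have ht1 : T.card ≥ 0 := by omega
  rw [psi_pf_gt hm T (by omega) (by omega)]
  have he : m - 1 - (m - 2 - T.card + 1) = T.card := by omega
  set iso := ((ST hm T).orderIsoOfFin (card_ST hm T))
  have hmem : (⟨m-2, by omega⟩ : Fin m) ∈ ST hm T := by
    rw [mem_ST]
    left
    rfl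
  obtain ⟨i0, hi0⟩ := iso.surjective ⟨⟨m-2, by omega⟩, hmem⟩
  have hmono : iso i0 ≤ iso ⟨m - 1 - (m - 2 - T.card + 1), by omega⟩ := by
    apply iso.monotone
    have := i0.isLt
    exact Fin.mk_le_mk.mpr (by omega)
  rw [hi0] at hmono
  have h1 : (m : ℕ) - 2 ≤ (iso ⟨m - 1 - (m - 2 - T.card + 1), by omega⟩ : Fin m).val := hmono
  have h2 := mem_ST_lt hm T (iso ⟨m - 1 - (m - 2 - T.card + 1), by omega⟩).2
  omega

lemma psi_uniAt : UniAt (Psi hm T) (m - 2 - T.card) := by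
  have htc := tcard_le T
  refine ⟨by omega, psi_peak hm T, ?_, ?_⟩
  · intro i j hij hjk
    rw [psi_pf_le hm T (by omega) (by omega), psi_pf_le hm T (by omega) hjk]
    have := (((ST hm T)ᶜ).orderIsoOfFin (card_CT hm T)).strictMono
      (show (⟨i, by omega⟩ : Fin _) < ⟨j, by omega⟩ from Fin.mk_lt_mk.mpr hij)
    exact this
  · intro i j hki hij hjm
    rcases Nat.eq_or_lt_of_le hki with hik | hik
    · rw [← hik, psi_peak hm T]
      rw [psi_pf_gt hm T hjm (by omega)]
      have h2 := mem_ST_lt hm T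
        (((ST hm T).orderIsoOfFin (card_ST hm T)) ⟨m - 1 - j, by omega⟩).2
      omega
    · rw [psi_pf_gt hm T (x := i) (by omega) (by omega), psi_pf_gt hm T (x := j) hjm (by omega)]
      have := ((ST hm T).orderIsoOfFin (card_ST hm T)).strictMono
        (show (⟨m - 1 - j, by omega⟩ : Fin _) < ⟨m - 1 - i, by omega⟩ from
          Fin.mk_lt_mk.mpr (by omega))
      exact this

lemma psi_code (hT : T.Nonempty) (v : Fin (m-2)) :
    v ∈ T ↔ m - 2 - T.card + 2 ≤ pf (Psi hm T).symm v.val := by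
  have htc := tcard_le T
  have ht1 : 1 ≤ T.card := Finset.card_pos.mpr hT
  have hvm : v.val < m := by have := v.isLt; omega
  constructor
  · intro hv
    have hmem : (⟨v.val, hvm⟩ : Fin m) ∈ ST hm T := by
      rw [mem_ST]
      exact Or.inr ⟨v, hv, rfl⟩
    obtain ⟨i0, hi0⟩ := ((ST hm T).orderIsoOfFin (card_ST hm T)).surjective
      ⟨⟨v.val, hvm⟩, hmem⟩
    have hi0m := i0.isLt
    have hx : pf (Psi hm T) (m - 1 - i0.val) = v.val := by
      rw [psi_pf_gt hm T (by omega) (by omega)]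
      have : (⟨m - 1 - (m - 1 - i0.val), by omega⟩ : Fin (T.card + 1)) = i0 := by
        apply Fin.ext
        simp only []
        omega
      rw [this, hi0]
    have hne : i0.val ≠ T.card := by
      intro hc
      have e : m - 1 - i0.val = m - 2 - T.card + 1 := by omega
      rw [e] at hx
      have h2 := psi_second hm T
      have := v.isLt
      omega
    have hpos : pf (Psi hm T).symm v.val = m - 1 - i0.val := by
      rw [← hx, pf_symm_pf]
    omega
  · intro hpos
    set x := pf (Psi hm T).symm v.val with hxdef
    have hxm : x < m := pf_lt _ hvm
    have hval : pf (Psi hm T) x = v.val := pf_pf_symm _ v.val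
    rw [psi_pf_gt hm T hxm (by omega)] at hval
    have hmem := (((ST hm T).orderIsoOfFin (card_ST hm T)) ⟨m - 1 - x, by omega⟩).2
    rw [mem_ST] at hmem
    rcases hmem with hc | ⟨w, hw, he⟩
    · rw [hval] at hc
      have := v.isLt
      omega
    · rw [hval] at he
      have : v = w := Fin.ext he
      rw [this]
      exact hw

end Psi

end S13

namespace S13

section Surj

variable {m : ℕ} {π : Equiv.Perm (Fin m)} {k : ℕ}

/-- the tail code of a permutation -/
noncomputable def Tof (π : Equiv.Perm (Fin m)) (k : ℕ) : Finset (Fin (m-2)) :=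
  Finset.filter (fun v : Fin (m-2) => k + 2 ≤ pf π.symm v.val) Finset.univ

lemma mem_Tof {v : Fin (m-2)} : v ∈ Tof π k ↔ k + 2 ≤ pf π.symm v.val := by
  simp [Tof]

lemma Tof_card (h : UniAt π k) (hk3 : k + 3 ≤ m) (htop : pf π (k+1) = m - 2) :
    (Tof π k).card = m - 2 - k := by
  obtain ⟨hkm, hpk, mono, anti⟩ := h
  have : (Tof π k).card = (Finset.Ico (k+2) m).card := by
    refine Finset.card_bij' (fun v _ => pf π.symm v.val)
      (fun x hx => (⟨pf π x, by
        have hxm : k + 2 ≤ x ∧ x < m := by simpa [Finset.mem_Ico] using hx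
        have := anti (k+1) x (by omega) (by omega) (by omega)
        omega⟩ : Fin (m-2))) ?_ ?_ ?_ ?_
    · intro v hv
      rw [mem_Tof] at hv
      have hvm : v.val < m := by have := v.isLt; omega
      simp only [Finset.mem_Ico]
      exact ⟨hv, pf_lt π.symm hvm⟩
    · intro x hx
      rw [mem_Tof]
      show k + 2 ≤ pf π.symm (pf π x)
      rw [pf_symm_pf]
      simp only [Finset.mem_Ico] at hx
      exact hx.1
    · intro v hv
      apply Fin.ext
      exact pf_pf_symm π v.val
    · intro x hx
      show pf π.symm (pf π x) = x
      exact pf_symm_pf π x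
  rw [this, Nat.card_Ico]
  omega

lemma Tof_nonempty (h : UniAt π k) (hk3 : k + 3 ≤ m) (htop : pf π (k+1) = m - 2) :
    (Tof π k).Nonempty := by
  obtain ⟨hkm, hpk, mono, anti⟩ := h
  have hlast : pf π (m-1) < m - 2 := by
    have := anti (k+1) (m-1) (by omega) (by omega) (by omega)
    omega
  refine ⟨⟨pf π (m-1), hlast⟩, ?_⟩
  rw [mem_Tof]
  simp only [pf_symm_pf]
  omega

lemma pos_gt_iff (h : UniAt π k) (hk3 : k + 3 ≤ m) (htop : pf π (k+1) = m - 2)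
    {v : ℕ} (hv : v < m) :
    k < pf π.symm v ↔ (v = m - 2 ∨ (v < m - 2 ∧ k + 2 ≤ pf π.symm v)) := by
  obtain ⟨hkm, hpk, mono, anti⟩ := h
  have hpos : pf π (pf π.symm v) = v := pf_pf_symm π v
  have hposm : pf π.symm v < m := pf_lt π.symm hv
  constructor
  · intro hgt
    rcases Nat.eq_or_lt_of_le (show k + 1 ≤ pf π.symm v from hgt) with he | hlt
    · left
      rw [← hpos, ← he]
      exact htop
    · right
      refine ⟨?_, by omega⟩
      have := anti (k+1) (pf π.symm v) (by omega) (by omega) hposm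
      rw [hpos, htop] at this
      omega
  · rintro (he | ⟨hlt, hge⟩)
    · have : pf π.symm v = k + 1 := by
        rw [he, ← htop, pf_symm_pf]
      omega
    · omega

lemma R2_eq_Psi (h : UniAt π k) (hk3 : k + 3 ≤ m) (htop : pf π (k+1) = m - 2) :
    π = Psi (by omega : 3 ≤ m) (Tof π k) := by
  have hm : (3 : ℕ) ≤ m := by omega
  set T := Tof π k with hTdef
  have hTcard : T.card = m - 2 - k := by rw [hTdef]; exact Tof_card h hk3 htop
  have hTne : T.Nonempty := Tof_nonempty h hk3 htop
  have hkeq : m - 2 - T.card = k := by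
    have := tcard_le T
    omega
  have hU2 : UniAt (Psi hm T) k := by
    have := psi_uniAt hm T
    rwa [hkeq] at this
  have htop2 : pf (Psi hm T) (k + 1) = m - 2 := by
    have := psi_second hm T
    rwa [hkeq] at this
  apply uniAt_unique h hU2
  intro v hv
  have e1 := pos_gt_iff h hk3 htop hv
  have e2 := pos_gt_iff hU2 hk3 htop2 hv
  -- common characterization via T
  have c1 : (v < m - 2) → (k + 2 ≤ pf π.symm v ↔ k + 2 ≤ pf (Psi hm T).symm v) := by
    intro hvlt
    have hmem := mem_Tof (π := π) (k := k) (v := ⟨v, hvlt⟩)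
    have hcode := psi_code hm T hTne ⟨v, hvlt⟩
    rw [hkeq] at hcode
    exact Iff.trans hmem.symm hcode
  rcases Nat.lt_or_ge v (m-2) with hvlt | hvge
  · have := c1 hvlt
    omega
  · omega

lemma psi_inj {m : ℕ} (hm : 3 ≤ m) {T1 T2 : Finset (Fin (m-2))}
    (h1 : T1.Nonempty) (h2 : T2.Nonempty) (he : Psi hm T1 = Psi hm T2) : T1 = T2 := by
  have hk1 := uniAt_k_eq (psi_uniAt hm T1)
  have hk2 := uniAt_k_eq (psi_uniAt hm T2)
  rw [he] at hk1
  have hcard : T1.card = T2.card := by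
    have a1 := tcard_le T1
    have a2 := tcard_le T2
    omega
  apply Finset.ext
  intro v
  rw [psi_code hm T1 h1 v, psi_code hm T2 h2 v, he, hcard]

end Surj

lemma card_R2 {m : ℕ} (hm : 2 ≤ m) :
    Nat.card {π : Equiv.Perm (Fin m) // ∃ k, UniAt π k ∧ (k + 3 ≤ m ∧ pf π (k+1) = m - 2)}
      = 2^(m-2) - 1 := by
  rcases Nat.lt_or_ge m 3 with hm3 | hm3
  · -- m = 2 : empty on both sides
    have hempty : IsEmpty {π : Equiv.Perm (Fin m) //
        ∃ k, UniAt π k ∧ (k + 3 ≤ m ∧ pf π (k+1) = m - 2)} := by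
      constructor
      rintro ⟨π, k, hU, hk3, _⟩
      omega
    rw [@Nat.card_of_isEmpty _ hempty]
    have : m = 2 := by omega
    subst this
    rfl
  · have e : {T : Finset (Fin (m-2)) // T.Nonempty} ≃
        {π : Equiv.Perm (Fin m) // ∃ k, UniAt π k ∧ (k + 3 ≤ m ∧ pf π (k+1) = m - 2)} := by
      apply Equiv.ofBijective (fun T => ⟨Psi hm3 T.val, m - 2 - T.val.card, psi_uniAt hm3 T.val,
        by have := tcard_le T.val; have := Finset.card_pos.mpr T.prop; omega,
        psi_second hm3 T.val⟩)
      constructor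
      · rintro ⟨T1, h1⟩ ⟨T2, h2⟩ he
        have := psi_inj hm3 h1 h2 (congrArg Subtype.val he)
        exact Subtype.ext this
      · rintro ⟨π, k, hU, hk3, htop⟩
        refine ⟨⟨Tof π k, Tof_nonempty hU hk3 htop⟩, ?_⟩
        apply Subtype.ext
        exact (R2_eq_Psi hU hk3 htop).symm
    rw [← Nat.card_congr e, Nat.card_eq_fintype_card]
    have e2 : {T : Finset (Fin (m-2)) // T.Nonempty} ≃ {T : Finset (Fin (m-2)) // ¬ T = ∅} :=
      Equiv.subtypeEquivRight (fun T => Finset.nonempty_iff_ne_empty)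
    rw [Fintype.card_congr e2, Fintype.card_subtype_compl, Fintype.card_subtype_eq,
      Fintype.card_finset, Fintype.card_fin]

end S13

namespace S13

lemma main_count {m : ℕ} (hm : 2 ≤ m) :
    Nat.card {π : Equiv.Perm (Fin m) //
        AvoidsPat π p213 ∧ AvoidsPat π p312 ∧ AvoidsConsecPat (π ^ 2) p213} =
      2 ^ (m - 2) + (m - 1) := by
  classical
  have hiff : ∀ π : Equiv.Perm (Fin m),
      (AvoidsPat π p213 ∧ AvoidsPat π p312 ∧ AvoidsConsecPat (π ^ 2) p213) ↔
      ((∃ k, UniAt π k ∧ m ≤ k + 2) ∨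
        (∃ k, UniAt π k ∧ (k + 3 ≤ m ∧ pf π (k+1) = m - 2))) := by
    intro π
    rw [classify hm π]
    constructor
    · rintro ⟨k, hU, h | h⟩
      exacts [Or.inl ⟨k, hU, h⟩, Or.inr ⟨k, hU, h⟩]
    · rintro (⟨k, hU, h⟩ | ⟨k, hU, h⟩)
      exacts [⟨k, hU, Or.inl h⟩, ⟨k, hU, Or.inr h⟩]
  have hdisj : Disjoint (fun π : Equiv.Perm (Fin m) => ∃ k, UniAt π k ∧ m ≤ k + 2)
      (fun π : Equiv.Perm (Fin m) =>
        ∃ k, UniAt π k ∧ (k + 3 ≤ m ∧ pf π (k+1) = m - 2)) := by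
    rw [Pi.disjoint_iff]
    intro π
    rw [Prop.disjoint_iff]
    rintro ⟨⟨k1, hU1, hb1⟩, ⟨k2, hU2, hb2, _⟩⟩
    have e1 := uniAt_k_eq hU1
    have e2 := uniAt_k_eq hU2
    omega
  rw [Nat.card_congr ((Equiv.subtypeEquivRight hiff).trans (subtypeOrEquiv _ _ hdisj)),
    Nat.card_sum, card_R1 (by omega), card_R2 hm]
  have h1 : 1 ≤ 2 ^ (m - 2) := Nat.one_le_two_pow
  omega

end S13

/-- for n ≥ 3, g(n) = g(n−1) + 2^{n−3} + 1, where g(m) counts π ∈ S_m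
avoiding 213 and 312 with π² avoiding the consecutive pattern 213. -/
theorem stmt13 (n : ℕ) (hn : 3 ≤ n) :
    Nat.card {π : Equiv.Perm (Fin n) //
        AvoidsPat π p213 ∧ AvoidsPat π p312 ∧ AvoidsConsecPat (π ^ 2) p213} =
      Nat.card {π : Equiv.Perm (Fin (n - 1)) //
        AvoidsPat π p213 ∧ AvoidsPat π p312 ∧ AvoidsConsecPat (π ^ 2) p213} +
      2 ^ (n - 3) + 1 := by
  rw [S13.main_count (show 2 ≤ n by omega), S13.main_count (show 2 ≤ n - 1 by omega)]
  obtain ⟨a, rfl⟩ : ∃ a, n = a + 3 := ⟨n - 3, by omega⟩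
  have e1 : a + 3 - 2 = a + 1 := by omega
  have e2 : a + 3 - 1 = a + 2 := by omega
  have e3 : a + 2 - 2 = a := by omega
  have e4 : a + 3 - 3 = a := by omega
  have e5 : a + 3 - 1 - 2 = a := by omega
  have e6 : a + 3 - 1 - 1 = a + 1 := by omega
  rw [e1, e2, e4, e3, show a + 2 - 1 = a + 1 by omega, pow_succ]
  have h1 : 1 ≤ 2 ^ a := Nat.one_le_two_pow
  omega
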